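/- Let m ≥ 2 and let a = (a₁,…,aₘ) be a nondecreasing tuple of integers with each aᵢ ≥ 3, and define the boundary combinatorial curvature Φ(a) = 1 − (m+1)/2 + Σᵢ₌₁ᵐ 1/aᵢ. If Φ(a) > 0, then Φ(a) ∈ {1/30, 1/12, 1/6}; in particular Φ(a) ≥ 1/30. -/

import Mathlib

/-- The combinatorial curvature of a boundary vertex pattern: a boundary vertex
of degree `m + 1` incident to `m` faces of degrees `a₁ ≤ … ≤ aₘ` has curvature
`Φ = 1 - (m+1)/2 + ∑ᵢ 1/aᵢ`. -/
def bcurv (l : List ℕ) : ℚ :=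
  1 - ((l.length : ℚ) + 1) / 2 + (l.map fun x => (1 : ℚ) / x).sum

/-- If a boundary vertex pattern (nondecreasing, `m ≥ 2` faces, face degrees `≥ 3`)
has positive curvature, then its curvature lies in `{1/30, 1/12, 1/6}`;
in particular it is at least `1/30`. -/
lemma bcurv_eq (l : List ℕ) :
    bcurv l = 1 - ((l.length : ℚ) + 1) / 2 + (l.map fun x : ℕ => (1:ℚ)/(x:ℚ)).sum := by
  unfold bcurv
  congr 2
  induction l with
  | nil => rfl
  | cons a t ih => simpa using ih

theorem boundary_pattern_pos_curv_values (l : List ℕ) (hlen : 2 ≤ l.length)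
    (hsort : l.Pairwise (· ≤ ·)) (hge : ∀ x ∈ l, 3 ≤ x)
    (hpos : 0 < bcurv l) :
    bcurv l ∈ ({1 / 30, 1 / 12, 1 / 6} : Set ℚ) ∧ 1 / 30 ≤ bcurv l := by
  rw [bcurv_eq] at hpos ⊢
  have hsum : (l.map fun x : ℕ => (1 : ℚ) / (x:ℚ)).sum ≤ (l.length : ℚ) * (1/3) := by
    have hbound : ∀ y ∈ (l.map fun x : ℕ => (1 : ℚ) / (x:ℚ)), y ≤ 1/3 := by
      intro y hy
      rw [List.mem_map] at hy
      obtain ⟨x, hx, rfl⟩ := hy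
      have h3 : (3:ℚ) ≤ x := by exact_mod_cast hge x hx
      rw [div_le_div_iff₀ (by linarith) (by norm_num)]
      linarith
    have h := List.sum_le_card_nsmul (l.map fun x : ℕ => (1 : ℚ) / (x:ℚ)) (1/3) hbound
    rw [List.length_map, nsmul_eq_mul] at h
    exact h
  have hlen2 : l.length = 2 := by
    by_contra h
    have h3 : 3 ≤ l.length := by omega
    have hq : (3:ℚ) ≤ (l.length : ℚ) := by exact_mod_cast h3
    linarith
  obtain ⟨a, b, rfl⟩ := List.length_eq_two.mp hlen2
  have ha : 3 ≤ a := hge a (by simp)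
  have hb : 3 ≤ b := hge b (by simp)
  have hab : a ≤ b := by
    have := hsort
    simp [List.pairwise_cons] at this; exact this
  have hA : (0:ℚ) < a := by positivity
  have hB : (0:ℚ) < b := by positivity
  have hBA : (1:ℚ)/b ≤ 1/a := by
    apply one_div_le_one_div_of_le hA; exact_mod_cast hab
  have he : (1:ℚ) - (([a,b].length:ℚ)+1)/2 + ([a,b].map fun x : ℕ => (1:ℚ)/(x:ℚ)).sum
      = 1/(a:ℚ) + 1/(b:ℚ) - 1/2 := by
    simp; ring
  rw [he] at hpos
  have ha4 : a < 4 := by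
    by_contra h
    have h4 : (4:ℚ) ≤ a := by exact_mod_cast (by omega : 4 ≤ a)
    have : (1:ℚ)/a ≤ 1/4 := by
      rw [div_le_div_iff₀ hA (by norm_num)]; linarith
    linarith
  have ha3 : a = 3 := by omega
  subst ha3
  have h13 : (1:ℚ)/((3:ℕ):ℚ) = 1/3 := by norm_num
  rw [h13] at hpos
  have hb6 : b < 6 := by
    by_contra h
    have h6 : (6:ℚ) ≤ b := by exact_mod_cast (by omega : 6 ≤ b)
    have : (1:ℚ)/b ≤ 1/6 := by
      rw [div_le_div_iff₀ hB (by norm_num)]; linarith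
    linarith
  rw [he]
  interval_cases b <;> norm_num [Set.mem_insert_iff]
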